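/- Under the collaborative recommendation model, P(L_n = ∅) = E[Π_{i∈R_n} α_ni], and this quantity converges to 0 as n → ∞. -/

import Mathlib

open MeasureTheory ProbabilityTheory Finset Filter
open scoped BigOperators Topology

noncomputable section

namespace Collab

/-- Discrete measurable structure on finsets (used for the random sets of rated items). -/
instance instMeasFinset (α : Type*) : MeasurableSpace (Finset α) := ⊤

/-- Vectors of ratings. -/
abbrev Vec (d : ℕ) := Fin d → ℝ

/-- The Euclidean norm on `Fin d → ℝ`. -/
def nrm {d : ℕ} (x : Vec d) : ℝ := Real.sqrt (∑ j, x j ^ 2)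

/-- The cosine-type similarity `S̄`: the sum is restricted to the set
`J = {j : x j ≠ 0 ∧ x' j ≠ 0}`; the convention `S̄ = 0` when `J = ∅` is automatic
from `0 / 0 = 0`. -/
def simBar {d : ℕ} (x x' : Vec d) : ℝ :=
  (∑ j ∈ Finset.univ.filter (fun j => x j ≠ 0 ∧ x' j ≠ 0), x j * x' j) /
    (Real.sqrt (∑ j ∈ Finset.univ.filter (fun j => x j ≠ 0 ∧ x' j ≠ 0), x j ^ 2) *
      Real.sqrt (∑ j ∈ Finset.univ.filter (fun j => x j ≠ 0 ∧ x' j ≠ 0), x' j ^ 2))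

/-- Masking a vector by a set of coordinates: coordinates outside `m` are set to `0`. -/
def mask {d : ℕ} (m : Finset (Fin d)) (x : Vec d) : Vec d := fun j => if j ∈ m then x j else 0

/-- `i` is among the `k` points most similar to the target among the points indexed by `Rs`,
for the similarity `sim`, ties being broken by smaller index: the number of indices
`j ∈ Rs` that are strictly more similar than `i`, or as similar with `j ≤ i`
(this count includes `i` itself), is at most `k`. -/
def amongMS (sim : ℕ → ℝ) (Rs : Finset ℕ) (k i : ℕ) : Prop :=
  i ∈ Rs ∧ (Rs.filter (fun j => sim i < sim j ∨ (sim j = sim i ∧ j ≤ i))).card ≤ k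

/-- Index type for the mutually independent ingredients of the model: the new user's pair
`(X, Y)`, the database pairs `(X_i, Y_i)`, the preference sequences `(M_i^n)_{n ≥ 1}`,
and the random set `M`. -/
inductive Idx where
  | newuser : Idx
  | user (i : ℕ) : Idx
  | mseq (i : ℕ) : Idx
  | m : Idx

/-- Codomains of the independent ingredients. -/
def idxType (d : ℕ) : Idx → Type
  | .newuser => Vec d × ℝ
  | .user _ => Vec d × ℝ
  | .mseq _ => ℕ → Finset (Fin d)
  | .m => Finset (Fin d)

instance (d : ℕ) : ∀ x, MeasurableSpace (idxType d x)
  | .newuser => inferInstanceAs (MeasurableSpace (Vec d × ℝ))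
  | .user _ => inferInstanceAs (MeasurableSpace (Vec d × ℝ))
  | .mseq _ => inferInstanceAs (MeasurableSpace (ℕ → Finset (Fin d)))
  | .m => inferInstanceAs (MeasurableSpace (Finset (Fin d)))

variable {d : ℕ} {Ω : Type} [MeasurableSpace Ω]

/-- The family of independent ingredients of the model. -/
def fam (X : Ω → Vec d) (Y : Ω → ℝ) (M : Ω → Finset (Fin d))
    (Xi : ℕ → Ω → Vec d) (Yi : ℕ → Ω → ℝ) (Mi : ℕ → ℕ → Ω → Finset (Fin d)) :
    ∀ x : Idx, Ω → idxType d x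
  | .newuser => fun ω => (X ω, Y ω)
  | .user i => fun ω => (Xi i ω, Yi i ω)
  | .mseq i => fun ω n => Mi i (n + 1) ω
  | .m => M

/-- The sequential stochastic model for collaborative recommendation.  `(X, Y)` is the new
user, `M` the set of items he has rated, `(Xi i, Yi i)` the database users,
`Mi i n = M_i^n` the set of items rated by user `i` at his `n`-th time period (`n ≥ 1`),
`Mgen n = M^n` the generic preference sequence and `R n = 𝓡_n` the set of users having
rated the item of interest at time `n`. -/
structure Model (d : ℕ) (s : ℝ) {Ω : Type} [MeasurableSpace Ω] (P : Measure Ω)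
    (X : Ω → Vec d) (Y : Ω → ℝ) (M : Ω → Finset (Fin d))
    (Xi : ℕ → Ω → Vec d) (Yi : ℕ → Ω → ℝ)
    (Mi : ℕ → ℕ → Ω → Finset (Fin d)) (Mgen : ℕ → Ω → Finset (Fin d))
    (R : ℕ → Ω → Finset ℕ) : Prop where
  isProb : IsProbabilityMeasure P
  dim_pos : 1 ≤ d
  s_gt_one : 1 < s
  meas_X : Measurable X
  meas_Y : Measurable Y
  meas_M : Measurable M
  meas_Xi : ∀ i, Measurable (Xi i)
  meas_Yi : ∀ i, Measurable (Yi i)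
  meas_Mi : ∀ i n, Measurable (Mi i n)
  meas_Mgen : ∀ n, Measurable (Mgen n)
  meas_R : ∀ n, Measurable (R n)
  X_range : ∀ ω j, X ω j ∈ Set.Icc (1 : ℝ) s
  Y_range : ∀ ω, Y ω ∈ Set.Icc (1 : ℝ) s
  M_ne : ∀ ω, (M ω).Nonempty
  Mi_ne : ∀ i n ω, 1 ≤ n → (Mi i n ω).Nonempty
  Mi_mono : ∀ i n ω, Mi i n ω ⊆ Mi i (n + 1) ω
  Mgen_ne : ∀ n ω, 1 ≤ n → (Mgen n ω).Nonempty
  Mgen_mono : ∀ n ω, Mgen n ω ⊆ Mgen (n + 1) ω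
  /-- the database pairs are distributed as the new user's pair -/
  ident_user : ∀ i, 1 ≤ i → P.map (fun ω => (Xi i ω, Yi i ω)) = P.map (fun ω => (X ω, Y ω))
  /-- every preference sequence is distributed as the generic sequence `(M^n)_{n ≥ 1}` -/
  ident_seq : ∀ i, 1 ≤ i →
    P.map (fun ω => (fun n => Mi i (n + 1) ω)) = P.map (fun ω => (fun n => Mgen (n + 1) ω))
  /-- `M^1` is distributed as `M` -/
  ident_M1 : P.map (Mgen 1) = P.map M
  /-- a.s. there is a (random) time `n₀` at which all `d` items are rated -/
  Mgen_full : ∀ᵐ ω ∂P, ∃ n, 1 ≤ n ∧ Mgen n ω = Finset.univ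
  R_sub : ∀ n ω, R n ω ⊆ Finset.Icc 1 n
  R_ne : ∀ n ω, 1 ≤ n → (R n ω).Nonempty
  R_mono : ∀ n ω, R n ω ⊆ R (n + 1) ω
  /-- mutual independence of the new user, the database pairs, the preference sequences
  and `M` -/
  indep : iIndepFun (fam X Y M Xi Yi Mi) P
  /-- `𝓡_n` is independent of `M` and of the preference sequences -/
  indep_R : ∀ n, IndepFun (R n) (fun ω => (M ω, fun i m => Mi i (m + 1) ω)) P

variable (P : Measure Ω)

/-- `X* = masked version of X`. -/
def XstarF (M : Ω → Finset (Fin d)) (X : Ω → Vec d) (ω : Ω) : Vec d := mask (M ω) (X ω)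

/-- `X_i^{(n)}`: the coordinates of `X_i` corated (at time `n`) by user `i` and the new user. -/
def XinF (M : Ω → Finset (Fin d)) (Xi : ℕ → Ω → Vec d) (Mi : ℕ → ℕ → Ω → Finset (Fin d))
    (n i : ℕ) (ω : Ω) : Vec d := mask (Mi i (n + 1 - i) ω ∩ M ω) (Xi i ω)

/-- `X_i^*`: the coordinates of `X_i` rated by the new user. -/
def XistarF (M : Ω → Finset (Fin d)) (Xi : ℕ → Ω → Vec d) (i : ℕ) (ω : Ω) : Vec d :=
  mask (M ω) (Xi i ω)

/-- The penalty `p_i^{(n)} = |M_i^{n+1-i} ∩ M| / |M|`. -/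
def pinF (M : Ω → Finset (Fin d)) (Mi : ℕ → ℕ → Ω → Finset (Fin d)) (n i : ℕ) (ω : Ω) : ℝ :=
  ((Mi i (n + 1 - i) ω ∩ M ω).card : ℝ) / ((M ω).card : ℝ)

/-- The penalized similarity `S(X*, X_i^{(n)}) = p_i^{(n)} S̄(X*, X_i^{(n)})`. -/
def simS (X : Ω → Vec d) (M : Ω → Finset (Fin d)) (Xi : ℕ → Ω → Vec d)
    (Mi : ℕ → ℕ → Ω → Finset (Fin d)) (n i : ℕ) (ω : Ω) : ℝ :=
  pinF M Mi n i ω * simBar (XstarF M X ω) (XinF M Xi Mi n i ω)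

open scoped Classical in
/-- The `k_n`-NN weights `W_{ni}(X*)`, with the conventions `W_{ni} = 0` when
`|𝓡_n| < k_n` or `X_i^{(n)} = 0`. -/
def W (X : Ω → Vec d) (M : Ω → Finset (Fin d)) (Xi : ℕ → Ω → Vec d)
    (Mi : ℕ → ℕ → Ω → Finset (Fin d)) (R : ℕ → Ω → Finset ℕ) (k : ℕ → ℕ)
    (n i : ℕ) (ω : Ω) : ℝ :=
  if k n ≤ (R n ω).card ∧ XinF M Xi Mi n i ω ≠ 0 ∧
      amongMS (fun j => simS X M Xi Mi n j ω) (R n ω) (k n) i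
    then 1 / (k n : ℝ) else 0

/-- The cosine-type `k_n`-NN regression estimate `η_n(X*)`
(the convention `0 ⬝ ∞ = 0` is automatic since `y / 0 = 0` and `0 * y = 0` in Lean). -/
def etan (X : Ω → Vec d) (M : Ω → Finset (Fin d)) (Xi : ℕ → Ω → Vec d) (Yi : ℕ → Ω → ℝ)
    (Mi : ℕ → ℕ → Ω → Finset (Fin d)) (R : ℕ → Ω → Finset ℕ) (k : ℕ → ℕ)
    (n : ℕ) (ω : Ω) : ℝ :=
  nrm (XstarF M X ω) *
    ∑ i ∈ R n ω, W X M Xi Mi R k n i ω * (Yi i ω / nrm (XinF M Xi Mi n i ω))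

/-- The regression function evaluated at the new user: `η(X*) = E[Y | X*]`. -/
def etaX (X : Ω → Vec d) (Y : Ω → ℝ) (M : Ω → Finset (Fin d)) : Ω → ℝ :=
  P[Y|MeasurableSpace.comap (XstarF M X) inferInstance]

/-- `φ(X*) = E[Y / ‖X*‖ | X*/‖X*‖]`. -/
def phiX (X : Ω → Vec d) (Y : Ω → ℝ) (M : Ω → Finset (Fin d)) : Ω → ℝ :=
  P[fun ω => Y ω / nrm (XstarF M X ω)|MeasurableSpace.comap
    (fun ω => (nrm (XstarF M X ω))⁻¹ • XstarF M X ω) inferInstance]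

/-- `α_{ni} = P(M^{n+1-i} ⊉ M | M)`: by independence of `M` and the generic sequence, this
is the function of `M` given by `m ↦ P(M^{n+1-i} ⊉ m)`. -/
def alphaF (M : Ω → Finset (Fin d)) (Mgen : ℕ → Ω → Finset (Fin d)) (n i : ℕ) (ω : Ω) : ℝ :=
  (P {ω' | ¬ M ω ⊆ Mgen (n + 1 - i) ω'}).toReal

open scoped Classical in
/-- `L_n = {i ∈ 𝓡_n : T_i ≤ n}` where `T_i = min{k ≥ i : M ⊆ M_i^{k+1-i}}`. -/
def Lset (M : Ω → Finset (Fin d)) (Mi : ℕ → ℕ → Ω → Finset (Fin d)) (R : ℕ → Ω → Finset ℕ)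
    (n : ℕ) (ω : Ω) : Finset ℕ :=
  (R n ω).filter (fun i => ∃ kk, i ≤ kk ∧ kk ≤ n ∧ M ω ⊆ Mi i (kk + 1 - i) ω)

open scoped Classical in
/-- The Euclidean nearest neighbor weights `W*_{ni}(X*)` over the set `L_n`, computed with
the similarity `S̄(X*, X_i^*)`. -/
def Wstar (X : Ω → Vec d) (M : Ω → Finset (Fin d)) (Xi : ℕ → Ω → Vec d)
    (Mi : ℕ → ℕ → Ω → Finset (Fin d)) (R : ℕ → Ω → Finset ℕ) (k : ℕ → ℕ)
    (n i : ℕ) (ω : Ω) : ℝ :=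
  if amongMS (fun j => simBar (XstarF M X ω) (XistarF M Xi j ω)) (Lset M Mi R n ω) (k n) i
    then 1 / (k n : ℝ) else 0

/-- **Lemma 6.1.** `P(L_n = ∅) = E[∏_(i ∈ 𝓡_n) α_ni] → 0`. -/
theorem statement4
    {d : ℕ} {s : ℝ} {Ω : Type} [MeasurableSpace Ω] {P : Measure Ω}
    {X : Ω → Vec d} {Y : Ω → ℝ} {M : Ω → Finset (Fin d)}
    {Xi : ℕ → Ω → Vec d} {Yi : ℕ → Ω → ℝ}
    {Mi : ℕ → ℕ → Ω → Finset (Fin d)} {Mgen : ℕ → Ω → Finset (Fin d)}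
    {R : ℕ → Ω → Finset ℕ}
    (hmodel : Model d s P X Y M Xi Yi Mi Mgen R) :
    (∀ n, 1 ≤ n →
      (P {ω | Lset M Mi R n ω = ∅}).toReal =
        ∫ ω, ∏ i ∈ R n ω, alphaF P M Mgen n i ω ∂P) ∧
    Filter.Tendsto (fun n => ∫ ω, ∏ i ∈ R n ω, alphaF P M Mgen n i ω ∂P)
      Filter.atTop (nhds 0) := by
  classical
  have hP : IsProbabilityMeasure P := hmodel.isProb
  -- monotonicity of the preference sequences in time
  have hMiMono : ∀ i ω ⦃a b : ℕ⦄, a ≤ b → Mi i a ω ⊆ Mi i b ω := by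
    intro i ω a b hab
    induction b, hab using Nat.le_induction with
    | base => exact fun x hx => hx
    | succ b hb ih => exact fun x hx => hmodel.Mi_mono i b ω (ih hx)
  have hRMono : ∀ ω ⦃a b : ℕ⦄, a ≤ b → R a ω ⊆ R b ω := by
    intro ω a b hab
    induction b, hab using Nat.le_induction with
    | base => exact fun x hx => hx
    | succ b hb ih => exact fun x hx => hmodel.R_mono b ω (ih hx)
  have hone : ∀ n ω, 1 ≤ n → 1 ∈ R n ω := by
    intro n ω hn
    obtain ⟨j, hj⟩ := hmodel.R_ne 1 ω le_rfl
    have hj1 : j = 1 := by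
      have := hmodel.R_sub 1 ω hj
      simp only [Finset.mem_Icc] at this
      omega
    exact hRMono ω hn (hj1 ▸ hj)
  -- characterization of `Lset = ∅`
  have hLempty : ∀ n, 1 ≤ n → ∀ ω,
      (Lset M Mi R n ω = ∅ ↔ ∀ i ∈ R n ω, ¬ M ω ⊆ Mi i (n + 1 - i) ω) := by
    intro n hn ω
    rw [Lset, Finset.filter_eq_empty_iff]
    constructor
    · intro h i hi hsub
      exact h hi ⟨n, (Finset.mem_Icc.1 (hmodel.R_sub n ω hi)).2, le_rfl, hsub⟩
    · rintro h i hi ⟨k, hik, hkn, hsub⟩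
      exact h i hi (hsub.trans (hMiMono i ω (by omega : k + 1 - i ≤ n + 1 - i)))
  -- the "alpha" function of `m`
  set β : Finset (Fin d) → ℕ → ℕ → ENNReal :=
    fun m n i => P {ω' | ¬ m ⊆ Mgen (n + 1 - i) ω'} with hβdef
  -- identical distribution of the preference sequences
  have hmeasMiSeq : ∀ i, Measurable (fun ω (k : ℕ) => Mi i (k + 1) ω) :=
    fun i => measurable_pi_lambda _ (fun k => hmodel.meas_Mi i (k + 1))
  have hmeasMgenSeq : Measurable (fun ω (k : ℕ) => Mgen (k + 1) ω) :=
    measurable_pi_lambda _ (fun k => hmodel.meas_Mgen (k + 1))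
  have hswap : ∀ i, 1 ≤ i → ∀ (T : Set (ℕ → Finset (Fin d))), MeasurableSet T →
      P ((fun ω (k : ℕ) => Mi i (k + 1) ω) ⁻¹' T)
        = P ((fun ω (k : ℕ) => Mgen (k + 1) ω) ⁻¹' T) := by
    intro i hi T hT
    rw [← Measure.map_apply (hmeasMiSeq i) hT, ← Measure.map_apply hmeasMgenSeq hT,
      hmodel.ident_seq i hi]
  have hms : ∀ (k : ℕ) (S : Set (Finset (Fin d))),
      MeasurableSet {g : ℕ → Finset (Fin d) | g k ∈ S} := fun k S =>
    (measurable_pi_apply k :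
      Measurable fun g : ℕ → Finset (Fin d) => g k)
      (MeasurableSpace.measurableSet_top (s := S))
  have hms2 : ∀ (i k : ℕ) (S : Set (Finset (Fin d))),
      MeasurableSet {q : Finset (Fin d) × (ℕ → ℕ → Finset (Fin d)) | q.2 i k ∈ S} :=
    fun i k S =>
    (((measurable_pi_apply k).comp ((measurable_pi_apply i).comp measurable_snd)) :
      Measurable fun q : Finset (Fin d) × (ℕ → ℕ → Finset (Fin d)) => q.2 i k)
      (MeasurableSpace.measurableSet_top (s := S))
  have hmfst : ∀ (m : Finset (Fin d)),
      MeasurableSet {q : Finset (Fin d) × (ℕ → ℕ → Finset (Fin d)) | q.1 = m} := fun m =>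
    (measurable_fst :
      Measurable fun q : Finset (Fin d) × (ℕ → ℕ → Finset (Fin d)) => q.1)
      (MeasurableSpace.measurableSet_top (s := ({m} : Set (Finset (Fin d)))))
  -- single-factor identity
  have hfac : ∀ n (m : Finset (Fin d)) i, 1 ≤ i → i ≤ n →
      P {ω | ¬ m ⊆ Mi i (n + 1 - i) ω} = β m n i := by
    intro n m i hi1 hin
    have hT : MeasurableSet {g : ℕ → Finset (Fin d) | ¬ m ⊆ g (n - i)} :=
      hms (n - i) {t | ¬ m ⊆ t}
    have he : n + 1 - i = (n - i) + 1 := by omega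
    have h1 : {ω | ¬ m ⊆ Mi i (n + 1 - i) ω}
        = (fun ω (k : ℕ) => Mi i (k + 1) ω) ⁻¹' {g | ¬ m ⊆ g (n - i)} := by
      ext ω; simp [he]
    have h2 : (fun ω (k : ℕ) => Mgen (k + 1) ω) ⁻¹' {g | ¬ m ⊆ g (n - i)}
        = {ω' | ¬ m ⊆ Mgen (n + 1 - i) ω'} := by
      ext ω; simp [he]
    rw [h1, hswap i hi1 _ hT, h2]
  -- key independence computation over `M` and the sequences
  have hmseq_inj : Function.Injective Idx.mseq := by
    intro a b h; cases h; rfl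
  have keyC : ∀ n (m : Finset (Fin d)) (r : Finset ℕ), r ⊆ Finset.Icc 1 n →
      P ((M ⁻¹' {m}) ∩ ⋂ i ∈ r, {ω | ¬ m ⊆ Mi i (n + 1 - i) ω})
        = P (M ⁻¹' {m}) * ∏ i ∈ r, β m n i := by
    intro n m r hr
    set sets : ∀ x : Idx, Set (idxType d x) := fun x =>
      match x with
      | Idx.m => ({m} : Set (Finset (Fin d)))
      | Idx.mseq i => {g : ℕ → Finset (Fin d) | ¬ m ⊆ g (n - i)}
      | Idx.newuser => Set.univ
      | Idx.user _ => Set.univ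
      with hsetsdef
    have hmeas : ∀ x ∈ insert Idx.m (r.image Idx.mseq), MeasurableSet (sets x) := by
      intro x _
      match x with
      | Idx.m => exact MeasurableSpace.measurableSet_top
      | Idx.mseq i => exact hms (n - i) {t | ¬ m ⊆ t}
      | Idx.newuser => exact MeasurableSet.univ
      | Idx.user _ => exact MeasurableSet.univ
    have hkey := hmodel.indep.measure_inter_preimage_eq_mul
      (insert Idx.m (r.image Idx.mseq)) hmeas
    have hm_not : Idx.m ∉ r.image Idx.mseq := by
      simp only [Finset.mem_image]
      rintro ⟨i, -, h⟩; exact Idx.noConfusion h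
    have hfe : ∀ i : ℕ, fam X Y M Xi Yi Mi (Idx.mseq i) ⁻¹' sets (Idx.mseq i)
        = {ω | ¬ m ⊆ Mi i ((n - i) + 1) ω} := fun i => rfl
    have hfm : fam X Y M Xi Yi Mi Idx.m ⁻¹' sets Idx.m = M ⁻¹' {m} := rfl
    have hInter : (⋂ x ∈ insert Idx.m (r.image Idx.mseq),
          fam X Y M Xi Yi Mi x ⁻¹' sets x)
        = (M ⁻¹' {m}) ∩ ⋂ i ∈ r, {ω | ¬ m ⊆ Mi i (n + 1 - i) ω} := by
      rw [Finset.set_biInter_insert, Finset.set_biInter_finset_image, hfm]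
      congr 1
      refine Set.iInter₂_congr fun i hi => ?_
      have he : n + 1 - i = (n - i) + 1 := by
        have := (Finset.mem_Icc.1 (hr hi)).2; omega
      rw [hfe i, he]
    have hProd : (∏ x ∈ insert Idx.m (r.image Idx.mseq),
          P (fam X Y M Xi Yi Mi x ⁻¹' sets x))
        = P (M ⁻¹' {m}) * ∏ i ∈ r, β m n i := by
      rw [Finset.prod_insert hm_not,
        Finset.prod_image (fun a _ b _ h => hmseq_inj h), hfm]
      congr 1
      refine Finset.prod_congr rfl (fun i hi => ?_)
      have hi1 : 1 ≤ i := (Finset.mem_Icc.1 (hr hi)).1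
      have hin : i ≤ n := (Finset.mem_Icc.1 (hr hi)).2
      have he : n + 1 - i = (n - i) + 1 := by omega
      rw [hfe i, ← he, hfac n m i hi1 hin]
    rw [hInter, hProd] at hkey
    exact hkey
  -- independence of `R n` and `(M, Mi)`
  have hsplit : ∀ n (r : Finset ℕ)
      (U : Set (Finset (Fin d) × (ℕ → ℕ → Finset (Fin d)))), MeasurableSet U →
      P (R n ⁻¹' {r} ∩ (fun ω => (M ω, fun i k => Mi i (k + 1) ω)) ⁻¹' U)
        = P (R n ⁻¹' {r}) * P ((fun ω => (M ω, fun i k => Mi i (k + 1) ω)) ⁻¹' U) :=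
    fun n r U hU => (hmodel.indep_R n).measure_inter_preimage_eq_mul
      {r} U MeasurableSpace.measurableSet_top hU
  -- Part 1
  have part1 : ∀ n, 1 ≤ n →
      (P {ω | Lset M Mi R n ω = ∅}).toReal =
        ∫ ω, ∏ i ∈ R n ω, alphaF P M Mgen n i ω ∂P := by
    intro n hn
    set Q : Finset (Finset ℕ × Finset (Fin d)) :=
      (Finset.Icc 1 n).powerset ×ˢ (Finset.univ : Finset (Finset (Fin d))) with hQdef
    set A : Finset ℕ × Finset (Fin d) → Set Ω :=
      fun p => R n ⁻¹' {p.1} ∩ M ⁻¹' {p.2} with hAdef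
    set E : Finset ℕ × Finset (Fin d) → Set Ω :=
      fun p => (M ⁻¹' {p.2}) ∩ ⋂ i ∈ p.1, {ω | ¬ p.2 ⊆ Mi i (n + 1 - i) ω} with hEdef
    set C : Finset ℕ × Finset (Fin d) → Set Ω :=
      fun p => R n ⁻¹' {p.1} ∩ E p with hCdef
    have hmemQ : ∀ ω, (R n ω, M ω) ∈ Q := by
      intro ω
      simp only [hQdef, Finset.mem_product, Finset.mem_powerset, Finset.mem_univ, and_true]
      exact hmodel.R_sub n ω
    have hmemA : ∀ p ω, ω ∈ A p ↔ R n ω = p.1 ∧ M ω = p.2 := by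
      intro p ω
      simp [hAdef]
    have hmemC : ∀ p ω, ω ∈ C p ↔
        R n ω = p.1 ∧ M ω = p.2 ∧ ∀ i ∈ p.1, ¬ p.2 ⊆ Mi i (n + 1 - i) ω := by
      intro p ω
      simp only [hCdef, hEdef, Set.mem_inter_iff, Set.mem_preimage, Set.mem_singleton_iff,
        Set.mem_iInter, Set.mem_setOf_eq]
    -- measurability
    have hmeasA : ∀ p, MeasurableSet (A p) :=
      fun p => (hmodel.meas_R n MeasurableSpace.measurableSet_top).inter
        (hmodel.meas_M MeasurableSpace.measurableSet_top)
    have hmeasE : ∀ p, MeasurableSet (E p) := by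
      intro p
      refine (hmodel.meas_M MeasurableSpace.measurableSet_top).inter ?_
      refine MeasurableSet.biInter (Set.to_countable _) (fun i _ => ?_)
      exact hmodel.meas_Mi i (n + 1 - i)
        (MeasurableSpace.measurableSet_top (s := {t | ¬ p.2 ⊆ t}))
    have hmeasC : ∀ p, MeasurableSet (C p) :=
      fun p => (hmodel.meas_R n MeasurableSpace.measurableSet_top).inter (hmeasE p)
    -- the event as a disjoint union
    have hevent : {ω | Lset M Mi R n ω = ∅} = ⋃ p ∈ Q, C p := by
      ext ω
      simp only [Set.mem_setOf_eq, Set.mem_iUnion, hLempty n hn ω, exists_prop]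
      constructor
      · intro h
        exact ⟨(R n ω, M ω), hmemQ ω, (hmemC _ ω).2 ⟨rfl, rfl, h⟩⟩
      · rintro ⟨p, -, hw⟩
        obtain ⟨h1, h2, h3⟩ := (hmemC p ω).1 hw
        intro i hi
        rw [h2]
        exact h3 i (h1 ▸ hi)
    have hdisj : (↑Q : Set (Finset ℕ × Finset (Fin d))).PairwiseDisjoint C := by
      intro p _ q _ hpq
      refine Set.disjoint_left.2 (fun ω h1 h2 => hpq ?_)
      obtain ⟨a1, a2, -⟩ := (hmemC p ω).1 h1
      obtain ⟨b1, b2, -⟩ := (hmemC q ω).1 h2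
      exact Prod.ext (a1 ▸ b1.symm ▸ rfl) (a2 ▸ b2.symm ▸ rfl)
    have hPevent : P {ω | Lset M Mi R n ω = ∅} = ∑ p ∈ Q, P (C p) := by
      rw [hevent, measure_biUnion_finset hdisj (fun p _ => hmeasC p)]
    -- compute `P (C p)`
    have hPC : ∀ p ∈ Q, P (C p)
        = P (R n ⁻¹' {p.1}) * (P (M ⁻¹' {p.2}) * ∏ i ∈ p.1, β p.2 n i) := by
      rintro ⟨r, m⟩ hp
      have hrsub : r ⊆ Finset.Icc 1 n := by
        simp only [hQdef, Finset.mem_product, Finset.mem_powerset] at hp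
        exact hp.1
      set U : Set (Finset (Fin d) × (ℕ → ℕ → Finset (Fin d))) :=
        {q | q.1 = m ∧ ∀ i ∈ r, ¬ m ⊆ q.2 i (n - i)} with hUdef
      have hU : MeasurableSet U := by
        have hrepr : U = {q : Finset (Fin d) × (ℕ → ℕ → Finset (Fin d)) | q.1 = m} ∩
            ⋂ i ∈ r, {q : Finset (Fin d) × (ℕ → ℕ → Finset (Fin d)) | ¬ m ⊆ q.2 i (n - i)} := by
          ext q
          simp [hUdef, Set.mem_iInter]
        rw [hrepr]
        exact (hmfst m).inter (MeasurableSet.biInter (Set.to_countable _)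
          (fun i _ => hms2 i (n - i) {t | ¬ m ⊆ t}))
      have hpre : (fun ω => (M ω, fun i k => Mi i (k + 1) ω)) ⁻¹' U = E (r, m) := by
        ext ω
        simp only [hUdef, hEdef, Set.mem_preimage, Set.mem_setOf_eq, Set.mem_inter_iff,
          Set.mem_singleton_iff, Set.mem_iInter]
        refine and_congr Iff.rfl (forall_congr' fun i => forall_congr' fun hi => ?_)
        have he : n + 1 - i = (n - i) + 1 := by
          have := (Finset.mem_Icc.1 (hrsub hi)).2; omega
        rw [he]
      have h1 := hsplit n r U hU
      rw [hpre] at h1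
      calc P (C (r, m)) = P (R n ⁻¹' {r}) * P (E (r, m)) := h1
        _ = P (R n ⁻¹' {r}) * (P (M ⁻¹' {m}) * ∏ i ∈ r, β m n i) := by
            rw [show E (r, m)
                = (M ⁻¹' {m}) ∩ ⋂ i ∈ r, {ω | ¬ m ⊆ Mi i (n + 1 - i) ω} from rfl,
              keyC n m r hrsub]
    -- compute `P (A p)`
    have hPA : ∀ p, P (A p) = P (R n ⁻¹' {p.1}) * P (M ⁻¹' {p.2}) := by
      rintro ⟨r, m⟩
      set U : Set (Finset (Fin d) × (ℕ → ℕ → Finset (Fin d))) := Prod.fst ⁻¹' {m} with hUdef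
      have hU : MeasurableSet U :=
        measurable_fst MeasurableSpace.measurableSet_top
      have hpre : (fun ω => (M ω, fun i k => Mi i (k + 1) ω)) ⁻¹' U = M ⁻¹' {m} := by
        ext ω; simp [hUdef]
      have := hsplit n r U hU
      rw [hpre] at this
      exact this
    -- the integrand as a finite sum of indicators
    set c : Finset ℕ × Finset (Fin d) → ℝ :=
      fun p => ∏ i ∈ p.1, (β p.2 n i).toReal with hcdef
    have hfeq : ∀ ω, (∏ i ∈ R n ω, alphaF P M Mgen n i ω)
        = ∑ p ∈ Q, Set.indicator (A p) (fun _ => c p) ω := by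
      intro ω
      rw [Finset.sum_eq_single (R n ω, M ω)]
      · rw [Set.indicator_of_mem ((hmemA _ ω).2 ⟨rfl, rfl⟩)]
        exact Finset.prod_congr rfl (fun i _ => rfl)
      · intro p _ hne
        refine Set.indicator_of_notMem (fun hmem => hne ?_) _
        obtain ⟨h1, h2⟩ := (hmemA p ω).1 hmem
        exact Prod.ext h1.symm h2.symm
      · intro h
        exact absurd (hmemQ ω) h
    have hint : ∫ ω, ∏ i ∈ R n ω, alphaF P M Mgen n i ω ∂P
        = ∑ p ∈ Q, (P (A p)).toReal * c p := by
      rw [integral_congr_ae (Filter.Eventually.of_forall hfeq),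
        integral_finset_sum _ (fun p _ => (integrable_const (c p)).indicator (hmeasA p))]
      refine Finset.sum_congr rfl (fun p _ => ?_)
      rw [integral_indicator_const _ (hmeasA p), smul_eq_mul]
      rfl
    rw [hPevent, hint, ENNReal.toReal_sum (fun p _ => measure_ne_top P _)]
    refine Finset.sum_congr rfl (fun p hp => ?_)
    rw [hPC p hp, hPA p, hcdef]
    simp only [ENNReal.toReal_mul, ENNReal.toReal_prod]
    ring
  refine ⟨part1, ?_⟩
  -- Part 2: convergence to 0
  set G : ℕ → Set Ω := fun k => {ω | ¬ M ω ⊆ Mi 1 k ω} with hGdef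
  have hGmeas : ∀ k, MeasurableSet (G k) := by
    intro k
    have : G k = ⋃ m : Finset (Fin d), (M ⁻¹' {m} ∩ Mi 1 k ⁻¹' {t | ¬ m ⊆ t}) := by
      ext ω
      simp [hGdef]
    rw [this]
    exact MeasurableSet.iUnion (fun m =>
      (hmodel.meas_M MeasurableSpace.measurableSet_top).inter
        (hmodel.meas_Mi 1 k MeasurableSpace.measurableSet_top))
  have hGanti : Antitone G := by
    intro a b hab ω hb
    simp only [hGdef, Set.mem_setOf_eq] at hb ⊢
    exact fun h => hb (h.trans (hMiMono 1 ω hab))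
  have hGnull : P (⋂ k, G k) = 0 := by
    set T : Set (ℕ → Finset (Fin d)) := {g | ∀ k, g k ≠ Finset.univ} with hTdef
    have hT : MeasurableSet T := by
      have : T = ⋂ k, (fun g : ℕ → Finset (Fin d) => g k) ⁻¹' {Finset.univ}ᶜ := by
        ext g; simp [hTdef]
      rw [this]
      exact MeasurableSet.iInter (fun k =>
        measurable_pi_apply k MeasurableSpace.measurableSet_top)
    have hN : P ((fun ω (k : ℕ) => Mi 1 (k + 1) ω) ⁻¹' T) = 0 := by
      rw [hswap 1 le_rfl T hT]
      refine measure_mono_null ?_ (MeasureTheory.ae_iff.1 hmodel.Mgen_full)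
      intro ω hω
      simp only [Set.mem_preimage, hTdef, Set.mem_setOf_eq] at hω ⊢
      rintro ⟨k, hk1, hk⟩
      obtain ⟨k', rfl⟩ := Nat.exists_eq_add_of_le hk1
      exact hω k' (by rw [← hk]; congr 1; omega)
    refine measure_mono_null ?_ hN
    intro ω hω
    simp only [Set.mem_iInter, hGdef, Set.mem_setOf_eq] at hω
    simp only [Set.mem_preimage, hTdef, Set.mem_setOf_eq]
    intro k hk
    exact hω (k + 1) (by rw [hk]; exact Finset.subset_univ _)
  have htend0 : Filter.Tendsto (fun k => P (G k)) Filter.atTop (nhds 0) := by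
    have := tendsto_measure_iInter_atTop (fun k => (hGmeas k).nullMeasurableSet)
      hGanti ⟨0, measure_ne_top P _⟩
    rw [hGnull] at this
    exact this
  have htendR : Filter.Tendsto (fun k => (P (G k)).toReal) Filter.atTop (nhds 0) := by
    have h := (ENNReal.tendsto_toReal (a := 0) (by simp)).comp htend0
    exact h
  refine tendsto_of_tendsto_of_tendsto_of_le_of_le' tendsto_const_nhds htendR ?_ ?_
  · filter_upwards with n
    refine integral_nonneg (fun ω => Finset.prod_nonneg (fun i _ => ?_))
    exact ENNReal.toReal_nonneg
  · filter_upwards [Filter.eventually_ge_atTop 1] with n hn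
    rw [← part1 n hn]
    refine ENNReal.toReal_mono (measure_ne_top P _) (measure_mono ?_)
    intro ω hω
    simp only [Set.mem_setOf_eq] at hω
    have := (hLempty n hn ω).1 hω 1 (hone n ω hn)
    simp only [hGdef, Set.mem_setOf_eq]
    rw [(by omega : n + 1 - 1 = n)] at this
    exact this

end Collab
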